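/- Let q be a real number with 0 < q < 1, let d be an odd positive integer, let χ be a Dirichlet character modulo d, and let t be real. Then the series F_{χ,q}(t) = ∑_{n=0}^∞ 𝓔_{n,χ,q} t^n/n! converges absolutely, for each z with 0 ≤ z < 1 the series ∑_{n=0}^∞ χ(n)(−1)^n z^n exp([n]_q t) converges absolutely, and the Abel limit as z → 1⁻ of [2]_q ∑_{n=0}^∞ χ(n)(−1)^n z^n exp([n]_q t) exists and equals F_{χ,q}(t). (This is the precise meaning of the identity F_{χ,q}(t) = [2]_q ∑_{n=0}^∞ χ(n)(−1)^n e^{[n]_q t}.) -/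

import Mathlib

set_option maxRecDepth 10000
set_option maxHeartbeats 1000000

/-- The modified `q`-Euler polynomials
`𝓔_{n,q}(x) = [2]_q (1/(1-q))^n ∑_{l=0}^n C(n,l) (-1)^l q^{lx}/(1+q^l)`
(here `q ^ ((l : ℝ) * x)` is the real power `rpow`). -/
noncomputable def modqEulerPoly (q : ℝ) (n : ℕ) (x : ℝ) : ℝ :=
  (1 + q) * (1 / (1 - q)) ^ n *
    ∑ l ∈ Finset.range (n + 1),
      (n.choose l : ℝ) * (-1) ^ l * q ^ ((l : ℝ) * x) / (1 + q ^ l)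

/-- The modified generalized `q`-Euler numbers attached to a Dirichlet character `χ` mod `d`:
`𝓔_{n,χ,q} = [d]_q^n ([2]_q/[2]_{q^d}) ∑_{a=0}^{d-1} χ(a)(-1)^a 𝓔_{n,q^d}(a/d)`. -/
noncomputable def modqEulerNumberChi (q : ℝ) (d : ℕ) (χ : DirichletCharacter ℂ d)
    (n : ℕ) : ℂ :=
  ((((1 - q ^ d) / (1 - q)) ^ n * ((1 + q) / (1 + q ^ d)) : ℝ) : ℂ) *
    ∑ a ∈ Finset.range d,
      χ (a : ZMod d) * (-1) ^ a * ((modqEulerPoly (q ^ d) n ((a : ℝ) / d) : ℝ) : ℂ)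

open Finset Filter Topology

/-- Auxiliary rational function `Φ(w) = (∑_{a<d} χ(a)(-1)^a w^a)/(1+w^d)`. -/
noncomputable def auxPhi {d : ℕ} (χ : DirichletCharacter ℂ d) (w : ℝ) : ℂ :=
  (∑ a ∈ Finset.range d, χ (a : ZMod d) * (-1) ^ a * (w : ℂ) ^ a) / (1 + (w : ℂ) ^ d)

lemma real_exp_eq_tsum (x : ℝ) : Real.exp x = ∑' k : ℕ, x ^ k / k.factorial := by
  rw [Real.exp_eq_exp_ℝ, NormedSpace.exp_eq_tsum_div]

section aux

variable {d : ℕ} (χ : DirichletCharacter ℂ d)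

lemma aux_norm_term (w : ℝ) (hw0 : 0 ≤ w) (n : ℕ) :
    ‖χ (n : ZMod d) * (-1) ^ n * (w : ℂ) ^ n‖ ≤ w ^ n := by
  rw [norm_mul, norm_mul, norm_pow, norm_pow, norm_neg, norm_one, one_pow, mul_one,
    Complex.norm_real, Real.norm_eq_abs, abs_of_nonneg hw0]
  exact mul_le_of_le_one_left (pow_nonneg hw0 n) (χ.norm_le_one _)

lemma aux_summable (w : ℝ) (hw0 : 0 ≤ w) (hw1 : w < 1) :
    Summable fun n : ℕ => χ (n : ZMod d) * (-1) ^ n * (w : ℂ) ^ n :=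
  Summable.of_norm <| (summable_geometric_of_lt_one hw0 hw1).of_nonneg_of_le
    (fun _ => norm_nonneg _) (fun n => aux_norm_term χ w hw0 n)

lemma auxPhi_norm_le (hd : 0 < d) (w : ℝ) (hw0 : 0 ≤ w) (hw1 : w ≤ 1) :
    ‖auxPhi χ w‖ ≤ d := by
  rw [auxPhi, norm_div]
  have hcast : ((1 + w ^ d : ℝ) : ℂ) = 1 + (w : ℂ) ^ d := by push_cast; ring
  have hden : (1 : ℝ) ≤ ‖(1 : ℂ) + (w : ℂ) ^ d‖ := by
    rw [← hcast, Complex.norm_real, Real.norm_eq_abs, abs_of_pos (by positivity)]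
    nlinarith [pow_nonneg hw0 d]
  have hnum : ‖∑ a ∈ Finset.range d, χ (a : ZMod d) * (-1) ^ a * (w : ℂ) ^ a‖ ≤ d := by
    calc ‖∑ a ∈ Finset.range d, χ (a : ZMod d) * (-1) ^ a * (w : ℂ) ^ a‖
        ≤ ∑ a ∈ Finset.range d, ‖χ (a : ZMod d) * (-1) ^ a * (w : ℂ) ^ a‖ :=
          norm_sum_le _ _
      _ ≤ ∑ _a ∈ Finset.range d, (1 : ℝ) := by
          refine Finset.sum_le_sum fun a _ => ?_
          exact le_trans (aux_norm_term χ w hw0 a) (pow_le_one₀ hw0 hw1)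
      _ = d := by simp
  calc ‖∑ a ∈ Finset.range d, χ (a : ZMod d) * (-1) ^ a * (w : ℂ) ^ a‖ / ‖1 + (w : ℂ) ^ d‖
      ≤ ‖∑ a ∈ Finset.range d, χ (a : ZMod d) * (-1) ^ a * (w : ℂ) ^ a‖ :=
        div_le_self (norm_nonneg _) hden
    _ ≤ d := hnum

lemma aux_tsum (hd : 0 < d) (hdo : Odd d) (w : ℝ) (hw0 : 0 ≤ w) (hw1 : w < 1) :
    ∑' n : ℕ, χ (n : ZMod d) * (-1) ^ n * (w : ℂ) ^ n = auxPhi χ w := by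
  haveI : NeZero d := ⟨hd.ne'⟩
  set f : ℕ → ℂ := fun n => χ (n : ZMod d) * (-1) ^ n * (w : ℂ) ^ n with hf
  set g : ℕ × Fin d → ℂ := fun p =>
    (-(w : ℂ) ^ d) ^ p.1 *
      (χ ((p.2 : ℕ) : ZMod d) * (-1) ^ (p.2 : ℕ) * (w : ℂ) ^ (p.2 : ℕ)) with hg
  have hfg : ∀ p : ℕ × Fin d, f ((Nat.divModEquiv d).symm p) = g p := by
    rintro ⟨m, a⟩
    have hsymm : ((Nat.divModEquiv d).symm (m, a) : ℕ) = m * d + (a : ℕ) := rfl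
    have h1 : (((m * d + (a : ℕ) : ℕ)) : ZMod d) = ((a : ℕ) : ZMod d) := by
      push_cast [ZMod.natCast_self]; ring
    have h2 : ((-1 : ℂ)) ^ (m * d + (a : ℕ)) = (-1) ^ m * (-1) ^ (a : ℕ) := by
      rw [pow_add, pow_mul', hdo.neg_one_pow]
    have h3 : ((w : ℂ)) ^ (m * d + (a : ℕ)) = ((w : ℂ) ^ d) ^ m * (w : ℂ) ^ (a : ℕ) := by
      rw [pow_add, pow_mul']
    simp only [hf, hg, hsymm]
    rw [h1, h2, h3, neg_pow]
    ring
  have hsf : Summable f := aux_summable χ w hw0 hw1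
  have hsg : Summable g := by
    have h : Summable (f ∘ (Nat.divModEquiv d).symm) :=
      ((Nat.divModEquiv d).symm.summable_iff).mpr hsf
    exact h.congr hfg
  have hnorm : ‖-(w : ℂ) ^ d‖ < 1 := by
    rw [norm_neg, norm_pow, Complex.norm_real, Real.norm_eq_abs, abs_of_nonneg hw0]
    exact pow_lt_one₀ hw0 hw1 hd.ne'
  calc ∑' n : ℕ, f n
      = ∑' p : ℕ × Fin d, f ((Nat.divModEquiv d).symm p) :=
        ((Nat.divModEquiv d).symm.tsum_eq f).symm
    _ = ∑' p : ℕ × Fin d, g p := tsum_congr hfg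
    _ = ∑' m : ℕ, ∑' a : Fin d, g (m, a) :=
        Summable.tsum_prod' hsg fun _ => Summable.of_finite
    _ = ∑' m : ℕ, (-(w : ℂ) ^ d) ^ m *
          ∑ a : Fin d, χ ((a : ℕ) : ZMod d) * (-1) ^ (a : ℕ) * (w : ℂ) ^ (a : ℕ) := by
        refine tsum_congr fun m => ?_
        rw [tsum_fintype]
        simp only [hg]
        rw [← Finset.mul_sum]
    _ = (∑' m : ℕ, (-(w : ℂ) ^ d) ^ m) *
          ∑ a : Fin d, χ ((a : ℕ) : ZMod d) * (-1) ^ (a : ℕ) * (w : ℂ) ^ (a : ℕ) :=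
        tsum_mul_right
    _ = auxPhi χ w := by
        rw [tsum_geometric_of_norm_lt_one hnorm, sub_neg_eq_add,
          Fin.sum_univ_eq_sum_range (fun a : ℕ => χ (a : ZMod d) * (-1) ^ a * (w : ℂ) ^ a) d,
          auxPhi, div_eq_mul_inv, mul_comm]

end aux

lemma aux_poly_eq (q : ℝ) (hq0 : 0 < q) (d : ℕ) (hd : 0 < d) (k a : ℕ) :
    modqEulerPoly (q ^ d) k ((a : ℝ) / d) =
      (1 + q ^ d) * (1 / (1 - q ^ d)) ^ k *
        ∑ l ∈ Finset.range (k + 1),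
          (k.choose l : ℝ) * (-1) ^ l * q ^ (l * a) / (1 + q ^ (d * l)) := by
  rw [modqEulerPoly]
  congr 1
  refine Finset.sum_congr rfl fun l _ => ?_
  have hd' : (d : ℝ) ≠ 0 := Nat.cast_ne_zero.mpr hd.ne'
  have h1 : ((q ^ d : ℝ)) ^ ((l : ℝ) * ((a : ℝ) / d)) = q ^ (l * a) := by
    rw [← Real.rpow_natCast q d, ← Real.rpow_mul hq0.le, ← Real.rpow_natCast q (l * a)]
    congr 1
    push_cast
    field_simp
  have h2 : (q ^ d) ^ l = q ^ (d * l) := by rw [← pow_mul]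
  rw [h1, h2]

lemma aux_E_eq (q : ℝ) (hq0 : 0 < q) (hq1 : q < 1) (d : ℕ) (hd : 0 < d)
    (χ : DirichletCharacter ℂ d) (k : ℕ) :
    modqEulerNumberChi q d χ k =
      (((1 + q) * (1 / (1 - q)) ^ k : ℝ) : ℂ) *
        ∑ l ∈ Finset.range (k + 1),
          (k.choose l : ℂ) * (-1) ^ l * auxPhi χ (q ^ l) := by
  have hqd1 : q ^ d < 1 := pow_lt_one₀ hq0.le hq1 hd.ne'
  have hqd0 : (0:ℝ) < q ^ d := pow_pos hq0 d
  have h1q : (1 - q : ℝ) ≠ 0 := by nlinarith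
  have h1qd : (1 - q ^ d : ℝ) ≠ 0 := by nlinarith
  have h2qd : (1 + q ^ d : ℝ) ≠ 0 := by positivity
  have hPhi : ∀ l : ℕ, auxPhi χ (q ^ l) =
      (∑ a ∈ Finset.range d, χ (a : ZMod d) * (-1) ^ a * (q : ℂ) ^ (l * a)) *
        (1 + (q : ℂ) ^ (d * l))⁻¹ := by
    intro l
    rw [auxPhi, div_eq_mul_inv]
    have hb : ((q ^ l : ℝ) : ℂ) = (q : ℂ) ^ l := by push_cast; ring
    rw [hb]
    congr 1
    · exact Finset.sum_congr rfl fun a _ => by rw [← pow_mul]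
    · rw [← pow_mul, mul_comm l d]
  have hsum : (∑ a ∈ Finset.range d,
        χ (a : ZMod d) * (-1) ^ a * ((modqEulerPoly (q ^ d) k ((a : ℝ) / d) : ℝ) : ℂ))
      = (((1 + q ^ d) * (1 / (1 - q ^ d)) ^ k : ℝ) : ℂ) *
        ∑ a ∈ Finset.range d, ∑ l ∈ Finset.range (k + 1),
          χ (a : ZMod d) * (-1) ^ a *
            ((k.choose l : ℂ) * (-1) ^ l * (q : ℂ) ^ (l * a) * (1 + (q : ℂ) ^ (d * l))⁻¹) := by
    rw [Finset.mul_sum]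
    refine Finset.sum_congr rfl fun a _ => ?_
    rw [aux_poly_eq q hq0 d hd k a]
    push_cast
    simp only [Finset.mul_sum]
    refine Finset.sum_congr rfl fun l _ => ?_
    ring
  rw [modqEulerNumberChi, hsum, ← mul_assoc, ← Complex.ofReal_mul]
  have hK : ((1 - q ^ d) / (1 - q)) ^ k * ((1 + q) / (1 + q ^ d)) *
      ((1 + q ^ d) * (1 / (1 - q ^ d)) ^ k) = (1 + q) * (1 / (1 - q)) ^ k := by
    rw [div_pow, one_div_pow, one_div_pow]
    field_simp
  rw [hK, Finset.sum_comm]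
  congr 1
  refine Finset.sum_congr rfl fun l _ => ?_
  rw [hPhi l, Finset.sum_mul, Finset.mul_sum]
  refine Finset.sum_congr rfl fun a _ => ?_
  ring

theorem modqEulerChi_generating_function (q t : ℝ) (hq0 : 0 < q) (hq1 : q < 1)
    (d : ℕ) (hd : 0 < d) (hdo : Odd d) (χ : DirichletCharacter ℂ d) :
    (Summable fun n : ℕ =>
      ‖modqEulerNumberChi q d χ n * (t : ℂ) ^ n / (n.factorial : ℂ)‖) ∧
    (∀ z : ℝ, 0 ≤ z → z < 1 →
      Summable fun n : ℕ =>
        ‖χ (n : ZMod d) * (-1) ^ n * (z : ℂ) ^ n *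
          ((Real.exp ((1 - q ^ n) / (1 - q) * t) : ℝ) : ℂ)‖) ∧
    Filter.Tendsto
      (fun z : ℝ =>
        ((1 + q : ℝ) : ℂ) * ∑' n : ℕ, χ (n : ZMod d) * (-1) ^ n * (z : ℂ) ^ n *
          ((Real.exp ((1 - q ^ n) / (1 - q) * t) : ℝ) : ℂ))
      (nhdsWithin 1 (Set.Ico 0 1))
      (nhds (∑' n : ℕ, modqEulerNumberChi q d χ n * (t : ℂ) ^ n / (n.factorial : ℂ))) := by
  have h1q : (0:ℝ) < 1 - q := by linarith
  set c : ℝ := t / (1 - q) with hc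
  have hqk0 : ∀ k : ℕ, (0:ℝ) ≤ q ^ k := fun k => (pow_pos hq0 k).le
  have hqk1 : ∀ k : ℕ, q ^ k ≤ 1 := fun k => pow_le_one₀ hq0.le hq1.le
  set A : ℕ → ℂ := fun l => (-(c:ℂ)) ^ l / (l.factorial : ℂ) * auxPhi χ (q ^ l) with hA
  set B : ℕ → ℂ := fun j => (c:ℂ) ^ j / (j.factorial : ℂ) with hB
  have hAle : ∀ l, ‖A l‖ ≤ |c| ^ l / l.factorial * d := by
    intro l
    rw [hA]
    simp only
    rw [norm_mul, norm_div, norm_pow, norm_neg, Complex.norm_real, Real.norm_eq_abs,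
      Complex.norm_natCast]
    exact mul_le_mul_of_nonneg_left (auxPhi_norm_le χ hd _ (hqk0 l) (hqk1 l)) (by positivity)
  have hAnorm : Summable fun l => ‖A l‖ :=
    Summable.of_nonneg_of_le (fun _ => norm_nonneg _) hAle
      ((Real.summable_pow_div_factorial |c|).mul_right (d:ℝ))
  have hBeq : ∀ j, ‖B j‖ = |c| ^ j / j.factorial := by
    intro j
    rw [hB]
    simp only
    rw [norm_div, norm_pow, Complex.norm_real, Real.norm_eq_abs, Complex.norm_natCast]
  have hBnorm : Summable fun j => ‖B j‖ := by
    simpa only [hBeq] using Real.summable_pow_div_factorial |c|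
  have hBsum : ∑' j, B j = ((Real.exp c : ℝ) : ℂ) := by
    rw [real_exp_eq_tsum, Complex.ofReal_tsum]
    exact tsum_congr fun j => by push_cast; ring
  -- Cauchy product identification
  have key : ∀ k : ℕ, ∀ l ∈ Finset.range (k + 1),
      (((1 / (1 - q)) ^ k : ℝ) : ℂ) *
        ((k.choose l : ℂ) * (-1) ^ l * auxPhi χ (q ^ l)) * (t : ℂ) ^ k / (k.factorial : ℂ)
      = A l * B (k - l) := by
    intro k l hl
    have hlk : l ≤ k := Nat.lt_succ_iff.mp (Finset.mem_range.mp hl)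
    have hfl : ((l.factorial : ℕ) : ℂ) ≠ 0 := Nat.cast_ne_zero.mpr l.factorial_ne_zero
    have hfkl : (((k - l).factorial : ℕ) : ℂ) ≠ 0 := Nat.cast_ne_zero.mpr (k - l).factorial_ne_zero
    have hfk : ((k.factorial : ℕ) : ℂ) ≠ 0 := Nat.cast_ne_zero.mpr k.factorial_ne_zero
    have h1qC : (((1 - q) : ℝ) : ℂ) ≠ 0 := Complex.ofReal_ne_zero.mpr h1q.ne'
    have hcc : (c : ℂ) = (t : ℂ) * ((((1 - q) : ℝ) : ℂ))⁻¹ := by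
      rw [hc]; push_cast; ring
    have hcast : (((1 / (1 - q)) ^ k : ℝ) : ℂ) = (((((1 - q)) : ℝ) : ℂ)⁻¹) ^ k := by
      push_cast; ring
    have htk : (t : ℂ) ^ k = (t : ℂ) ^ l * (t : ℂ) ^ (k - l) := by
      rw [← pow_add, Nat.add_sub_cancel' hlk]
    have hxk : ((((1 - q) : ℝ) : ℂ)⁻¹) ^ k
        = ((((1 - q) : ℝ) : ℂ)⁻¹) ^ l * ((((1 - q) : ℝ) : ℂ)⁻¹) ^ (k - l) := by
      rw [← pow_add, Nat.add_sub_cancel' hlk]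
    have hk2 : ((k.factorial : ℕ) : ℂ)
        = (k.choose l : ℂ) * (l.factorial : ℂ) * ((k - l).factorial : ℂ) := by
      exact_mod_cast congrArg (Nat.cast : ℕ → ℂ)
        (Nat.choose_mul_factorial_mul_factorial hlk).symm
    have hch : (k.choose l : ℂ) ≠ 0 := Nat.cast_ne_zero.mpr (Nat.choose_pos hlk).ne'
    rw [hA, hB]
    simp only
    rw [hcc, hcast, hxk, htk, hk2]
    field_simp [hch, hfl, hfkl, h1qC]
    ring
  have hEk : ∀ k : ℕ, modqEulerNumberChi q d χ k * (t : ℂ) ^ k / (k.factorial : ℂ)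
      = ((1 + q : ℝ) : ℂ) * ∑ l ∈ Finset.range (k + 1), A l * B (k - l) := by
    intro k
    have hs : ∑ l ∈ Finset.range (k + 1), A l * B (k - l)
        = (((1 / (1 - q)) ^ k : ℝ) : ℂ) *
            (∑ l ∈ Finset.range (k + 1), (k.choose l : ℂ) * (-1) ^ l * auxPhi χ (q ^ l)) *
            (t : ℂ) ^ k / (k.factorial : ℂ) := by
      rw [Finset.mul_sum, Finset.sum_mul, Finset.sum_div]
      exact (Finset.sum_congr rfl (key k)).symm
    rw [aux_E_eq q hq0 hq1 d hd χ k, hs, Complex.ofReal_mul]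
    ring
  have hF : (∑' k : ℕ, modqEulerNumberChi q d χ k * (t : ℂ) ^ k / (k.factorial : ℂ))
      = ((1 + q : ℝ) : ℂ) * ((∑' l, A l) * ∑' j, B j) := by
    rw [tsum_mul_tsum_eq_tsum_sum_range_of_summable_norm hAnorm hBnorm, ← tsum_mul_left]
    exact tsum_congr hEk
  have part1 : Summable fun k : ℕ =>
      ‖modqEulerNumberChi q d χ k * (t : ℂ) ^ k / (k.factorial : ℂ)‖ := by
    have h := (summable_norm_sum_mul_range_of_summable_norm hAnorm hBnorm).mul_left (1 + q)
    refine h.congr fun k => ?_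
    rw [hEk k, norm_mul, Complex.norm_real, Real.norm_eq_abs,
      abs_of_pos (by linarith : (0:ℝ) < 1 + q)]
  have part2 : ∀ z : ℝ, 0 ≤ z → z < 1 →
      Summable fun n : ℕ =>
        ‖χ (n : ZMod d) * (-1) ^ n * (z : ℂ) ^ n *
          ((Real.exp ((1 - q ^ n) / (1 - q) * t) : ℝ) : ℂ)‖ := by
    intro z hz0 hz1
    set M := Real.exp (|t| / (1 - q)) with hM
    have hbound : ∀ n : ℕ,
        ‖χ (n : ZMod d) * (-1) ^ n * (z : ℂ) ^ n *
          ((Real.exp ((1 - q ^ n) / (1 - q) * t) : ℝ) : ℂ)‖ ≤ z ^ n * M := by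
      intro n
      rw [norm_mul, Complex.norm_real, Real.norm_eq_abs, abs_of_pos (Real.exp_pos _)]
      have h3 : (0:ℝ) ≤ (1 - q ^ n) / (1 - q) :=
        div_nonneg (by linarith [hqk1 n]) h1q.le
      have h2 : Real.exp ((1 - q ^ n) / (1 - q) * t) ≤ M := by
        rw [hM]
        apply Real.exp_le_exp.mpr
        calc (1 - q ^ n) / (1 - q) * t ≤ |(1 - q ^ n) / (1 - q) * t| := le_abs_self _
          _ = (1 - q ^ n) / (1 - q) * |t| := by rw [abs_mul, abs_of_nonneg h3]
          _ ≤ 1 / (1 - q) * |t| := by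
              have h5 : 1 - q ^ n ≤ 1 := by nlinarith [pow_pos hq0 n]
              gcongr
          _ = |t| / (1 - q) := by ring
      exact mul_le_mul (aux_norm_term χ z hz0 n) h2 (Real.exp_pos _).le (pow_nonneg hz0 n)
    exact Summable.of_nonneg_of_le (fun _ => norm_nonneg _) hbound
      ((summable_geometric_of_lt_one hz0 hz1).mul_right M)
  -- closed form on [0,1)
  have hG : ∀ z : ℝ, 0 ≤ z → z < 1 →
      (∑' n : ℕ, χ (n : ZMod d) * (-1) ^ n * (z : ℂ) ^ n *
        ((Real.exp ((1 - q ^ n) / (1 - q) * t) : ℝ) : ℂ))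
      = ((Real.exp c : ℝ) : ℂ) *
          ∑' k : ℕ, (-(c:ℂ)) ^ k / (k.factorial : ℂ) * auxPhi χ (z * q ^ k) := by
    intro z hz0 hz1
    set F : ℕ × ℕ → ℂ := fun p =>
      (-(c:ℂ)) ^ p.2 / (p.2.factorial : ℂ) *
        (χ ((p.1 : ℕ) : ZMod d) * (-1) ^ p.1 * (((z * q ^ p.2 : ℝ)) : ℂ) ^ p.1) with hFdef
    have hwk : ∀ k : ℕ, 0 ≤ z * q ^ k ∧ z * q ^ k < 1 := by
      intro k
      constructor
      · exact mul_nonneg hz0 (hqk0 k)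
      · exact lt_of_le_of_lt (mul_le_of_le_one_right hz0 (hqk1 k)) hz1
    have hFb : ∀ p : ℕ × ℕ, ‖F p‖ ≤ z ^ p.1 * (|c| ^ p.2 / p.2.factorial) := by
      rintro ⟨n, k⟩
      rw [hFdef]
      simp only
      rw [norm_mul, norm_div, norm_pow, norm_neg, Complex.norm_real, Real.norm_eq_abs,
        Complex.norm_natCast]
      have hb1 : ‖χ ((n : ℕ) : ZMod d) * (-1) ^ n * (((z * q ^ k : ℝ)) : ℂ) ^ n‖ ≤ z ^ n := by
        refine le_trans (aux_norm_term χ _ (hwk k).1 n) ?_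
        exact pow_le_pow_left₀ (hwk k).1 (mul_le_of_le_one_right hz0 (hqk1 k)) n
      calc |c| ^ k / (k.factorial : ℝ) * ‖_‖ ≤ |c| ^ k / (k.factorial : ℝ) * z ^ n :=
            mul_le_mul_of_nonneg_left hb1 (by positivity)
        _ = z ^ n * (|c| ^ k / k.factorial) := by ring
    have hFsum : Summable F := by
      apply Summable.of_norm
      refine Summable.of_nonneg_of_le (fun _ => norm_nonneg _) hFb ?_
      exact (summable_geometric_of_lt_one hz0 hz1).mul_of_nonneg
        (Real.summable_pow_div_factorial |c|) (fun n => pow_nonneg hz0 n)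
        (fun k => by positivity)
    have hterm : ∀ n : ℕ, χ ((n : ℕ) : ZMod d) * (-1) ^ n * (z : ℂ) ^ n *
        ((Real.exp ((1 - q ^ n) / (1 - q) * t) : ℝ) : ℂ)
        = ((Real.exp c : ℝ) : ℂ) * ∑' k : ℕ, F (n, k) := by
      intro n
      have h0 : (1 - q ^ n) / (1 - q) * t = c + (-(q ^ n * c)) := by
        rw [hc]; field_simp; ring
      have hinner : ∑' k : ℕ, F (n, k)
          = χ ((n : ℕ) : ZMod d) * (-1) ^ n * (z : ℂ) ^ n *
              ∑' k : ℕ, (((-(q ^ n * c)) ^ k / k.factorial : ℝ) : ℂ) := by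
        rw [← tsum_mul_left]
        refine tsum_congr fun k => ?_
        rw [hFdef]
        simp only
        push_cast
        ring
      rw [h0, Real.exp_add, Complex.ofReal_mul, hinner,
        real_exp_eq_tsum (-(q ^ n * c)), Complex.ofReal_tsum]
      ring
    have hs1 : ∀ n : ℕ, Summable fun k => F (n, k) := fun n => hFsum.prod_factor n
    have hs2 : ∀ k : ℕ, Summable fun n => F (n, k) := fun k => hFsum.prod_symm.prod_factor k
    calc (∑' n : ℕ, χ ((n : ℕ) : ZMod d) * (-1) ^ n * (z : ℂ) ^ n *
            ((Real.exp ((1 - q ^ n) / (1 - q) * t) : ℝ) : ℂ))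
        = ∑' n : ℕ, ((Real.exp c : ℝ) : ℂ) * ∑' k : ℕ, F (n, k) := tsum_congr hterm
      _ = ((Real.exp c : ℝ) : ℂ) * ∑' n : ℕ, ∑' k : ℕ, F (n, k) := tsum_mul_left
      _ = ((Real.exp c : ℝ) : ℂ) * ∑' k : ℕ, ∑' n : ℕ, F (n, k) := by
          have hFsum' : Summable (Function.uncurry fun n k : ℕ => F (n, k)) :=
            hFsum.congr fun p => rfl
          exact congrArg (fun s => ((Real.exp c : ℝ) : ℂ) * s)
            ((Summable.tsum_comm' hFsum' hs1 hs2).symm)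
      _ = ((Real.exp c : ℝ) : ℂ) *
            ∑' k : ℕ, (-(c:ℂ)) ^ k / (k.factorial : ℂ) * auxPhi χ (z * q ^ k) := by
          congr 1
          refine tsum_congr fun k => ?_
          rw [← aux_tsum χ hd hdo _ (hwk k).1 (hwk k).2, ← tsum_mul_left]
  -- dominated convergence for the limit
  have hcont : ∀ k : ℕ, Tendsto
      (fun z : ℝ => (-(c:ℂ)) ^ k / (k.factorial : ℂ) * auxPhi χ (z * q ^ k))
      (nhdsWithin 1 (Set.Ico (0:ℝ) 1))
      (nhds ((-(c:ℂ)) ^ k / (k.factorial : ℂ) * auxPhi χ (q ^ k))) := by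
    intro k
    apply Tendsto.const_mul
    have h1 : Tendsto (fun z : ℝ => z * q ^ k) (nhdsWithin 1 (Set.Ico (0:ℝ) 1)) (nhds (q ^ k)) := by
      have hcont1 : Continuous fun z : ℝ => z * q ^ k := continuous_id.mul continuous_const
      have h := (hcont1.tendsto 1).mono_left (nhdsWithin_le_nhds (s := Set.Ico (0:ℝ) 1))
      simpa using h
    have h2 : ContinuousAt (auxPhi χ) (q ^ k) := by
      apply ContinuousAt.div
      · exact (continuous_finset_sum _ fun a _ => by fun_prop).continuousAt
      · exact (continuous_const.add (Complex.continuous_ofReal.pow d)).continuousAt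
      · have hne : ((1 + (q ^ k) ^ d : ℝ) : ℂ) ≠ 0 := Complex.ofReal_ne_zero.mpr (by positivity)
        push_cast at hne
        convert hne using 2
        norm_cast
    have h := h2.tendsto.comp h1
    exact h
  have hbound2 : ∀ᶠ z in nhdsWithin 1 (Set.Ico (0:ℝ) 1), ∀ k : ℕ,
      ‖(-(c:ℂ)) ^ k / (k.factorial : ℂ) * auxPhi χ (z * q ^ k)‖
        ≤ |c| ^ k / k.factorial * d := by
    filter_upwards [self_mem_nhdsWithin] with z hz k
    obtain ⟨hz0, hz1⟩ := hz
    rw [norm_mul, norm_div, norm_pow, norm_neg, Complex.norm_real, Real.norm_eq_abs,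
      Complex.norm_natCast]
    refine mul_le_mul_of_nonneg_left ?_ (by positivity)
    exact auxPhi_norm_le χ hd _ (mul_nonneg hz0 (hqk0 k))
      ((mul_le_of_le_one_right hz0 (hqk1 k)).trans hz1.le)
  have hlim := tendsto_tsum_of_dominated_convergence
    ((Real.summable_pow_div_factorial |c|).mul_right (d:ℝ)) hcont hbound2
  refine ⟨part1, part2, ?_⟩
  have hpt : (∑' k : ℕ, modqEulerNumberChi q d χ k * (t : ℂ) ^ k / (k.factorial : ℂ))
      = ((1 + q : ℝ) : ℂ) * (((Real.exp c : ℝ) : ℂ) *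
          ∑' k : ℕ, (-(c:ℂ)) ^ k / (k.factorial : ℂ) * auxPhi χ (q ^ k)) := by
    rw [hF, hBsum]
    ring
  rw [hpt]
  have hfinal : Tendsto
      (fun z : ℝ => ((1 + q : ℝ) : ℂ) * (((Real.exp c : ℝ) : ℂ) *
        ∑' k : ℕ, (-(c:ℂ)) ^ k / (k.factorial : ℂ) * auxPhi χ (z * q ^ k)))
      (nhdsWithin 1 (Set.Ico (0:ℝ) 1))
      (nhds (((1 + q : ℝ) : ℂ) * (((Real.exp c : ℝ) : ℂ) *
        ∑' k : ℕ, (-(c:ℂ)) ^ k / (k.factorial : ℂ) * auxPhi χ (q ^ k)))) :=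
    (hlim.const_mul _).const_mul _
  refine Tendsto.congr' ?_ hfinal
  filter_upwards [self_mem_nhdsWithin] with z hz
  rw [hG z hz.1 hz.2]
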